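/- Let d ≥ 1, M ≥ 2, let p, p_1, …, p_M ∈ ℝ^d with p ≠ p_m for all m, and let c > 0. Define τ_m = ‖p − p_m‖₂/c, the delay-gradient vectors g_i ∈ ℝ^M by [g_i]_m = (p_i − [p_m]_i)/(c‖p − p_m‖₂) for 1 ≤ i ≤ d, the centering projection P = I_M − (1/M)𝟙𝟙ᵀ, the geometry matrix G ∈ ℝ^{d×d} by G_{ij} = (P g_i)ᵀ(P g_j), and for f ∈ ℝ the steering vector v(f) ∈ ℂ^M with [v(f)]_m = exp(−2πℹ f τ_m). Fix band constants S_b > 0, B_b > 0, and an effective noise level σ² > 0; set γ = S_b B_b²/σ², w = 2Mγ²/(1 + Mγ), D_i = diag(g_i), S(f) = S_b B_b² v(f)v(f)* + σ² I_M, and S'_i(f) = 2πℹ f S_b B_b² (v(f)v(f)* D_i − D_i v(f)v(f)*). Then for every f ∈ ℝ and all 1 ≤ i, j ≤ d: tr(S(f)^{-1} S'_i(f) S(f)^{-1} S'_j(f)) = (2πf)² · w · G_{ij}. -/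

import Mathlib

open Matrix Real

lemma L1' {M : ℕ} (d x y : Fin M → ℂ) :
    diagonal d * vecMulVec x y = vecMulVec (d * x) y := by
  ext m n; simp [vecMulVec_apply, diagonal_mul, Pi.mul_apply, mul_assoc]

lemma L2' {M : ℕ} (d x y : Fin M → ℂ) :
    vecMulVec x y * diagonal d = vecMulVec x (y * d) := by
  ext m n; simp [vecMulVec_apply, mul_diagonal, Pi.mul_apply, mul_assoc]

lemma L3' {M : ℕ} (x y x' y' : Fin M → ℂ) :
    vecMulVec x y * vecMulVec x' y' = (y ⬝ᵥ x') • vecMulVec x y' := by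
  ext m n
  simp [vecMulVec_apply, mul_apply, dotProduct, Finset.sum_mul, Finset.mul_sum]
  congr 1; ext k; ring

lemma L4' {M : ℕ} (x y : Fin M → ℂ) : Matrix.trace (vecMulVec x y) = x ⬝ᵥ y := by
  simp [Matrix.trace, vecMulVec_apply, dotProduct, Matrix.diag]


set_option maxHeartbeats 2000000 in
/-- **Key trace identity (Lemma 1).** On a spectral band with source PSD level `S_b`,
test-channel gain `B_b` and effective noise level `σ² > 0`, for the compressed
cross-spectral density `S(f) = S_b B_b² v(f)v(f)* + σ² I` and its coordinate
derivatives `S'_i(f) = 2πi f S_b B_b² (v(f)v(f)* D_i − D_i v(f)v(f)*)`,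
`tr(S(f)⁻¹ S'_i(f) S(f)⁻¹ S'_j(f)) = (2πf)² w G_{ij}` where
`γ = S_b B_b²/σ²`, `w = 2Mγ²/(1+Mγ)` and `G` is the geometry matrix. -/
theorem whittle_trace_identity
    (d M : ℕ) (hd : 1 ≤ d) (hM : 2 ≤ M)
    (p : EuclideanSpace ℝ (Fin d)) (ps : Fin M → EuclideanSpace ℝ (Fin d))
    (hps : ∀ m, p ≠ ps m) (c : ℝ) (hc : 0 < c)
    (τ : Fin M → ℝ) (hτ : ∀ m, τ m = ‖p - ps m‖ / c)
    (g : Fin d → Fin M → ℝ)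
    (hg : ∀ i m, g i m = (p i - ps m i) / (c * ‖p - ps m‖))
    (P : Matrix (Fin M) (Fin M) ℝ)
    (hP : P = (1 : Matrix (Fin M) (Fin M) ℝ) - ((M : ℝ))⁻¹ • vecMulVec 1 1)
    (G : Fin d → Fin d → ℝ)
    (hG : ∀ i j, G i j = P.mulVec (g i) ⬝ᵥ P.mulVec (g j))
    (v : ℝ → Fin M → ℂ)
    (hv : ∀ f m, v f m = Complex.exp (-(2 * π * Complex.I * f * τ m)))
    (Sb Bb σ2 : ℝ) (hSb : 0 < Sb) (hBb : 0 < Bb) (hσ2 : 0 < σ2)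
    (γ : ℝ) (hγ : γ = Sb * Bb ^ 2 / σ2)
    (w : ℝ) (hw : w = 2 * M * γ ^ 2 / (1 + M * γ))
    (D : Fin d → Matrix (Fin M) (Fin M) ℂ)
    (hD : ∀ i, D i = Matrix.diagonal fun m => (g i m : ℂ))
    (S : ℝ → Matrix (Fin M) (Fin M) ℂ)
    (hS : ∀ f, S f = ((Sb * Bb ^ 2 : ℝ) : ℂ) • vecMulVec (v f) (star (v f))
        + ((σ2 : ℝ) : ℂ) • (1 : Matrix (Fin M) (Fin M) ℂ))
    (S' : Fin d → ℝ → Matrix (Fin M) (Fin M) ℂ)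
    (hS' : ∀ i f, S' i f = (2 * π * Complex.I * f * (Sb * Bb ^ 2)) •
        (vecMulVec (v f) (star (v f)) * D i - D i * vecMulVec (v f) (star (v f)))) :
    ∀ (f : ℝ) (i j : Fin d),
      Matrix.trace ((S f)⁻¹ * S' i f * (S f)⁻¹ * S' j f)
        = (((2 * π * f) ^ 2 * w * G i j : ℝ) : ℂ) := by
  intro f i j
  have hu : ∀ m, star (v f m) * v f m = 1 := by
    intro m
    have hz : star (v f m) = Complex.exp (2 * π * Complex.I * f * τ m) := by
      rw [hv, Complex.star_def, ← Complex.exp_conj]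
      congr 1
      simp only [map_neg, _root_.map_mul, Complex.conj_I, Complex.conj_ofReal, map_ofNat]
      ring
    rw [hz, hv, ← Complex.exp_add]
    simp
  -- dot product evaluations
  have e0 : star (v f) ⬝ᵥ v f = (M : ℂ) := by
    simp only [dotProduct, Pi.star_apply, hu]
    simp
  have e0' : v f ⬝ᵥ star (v f) = (M : ℂ) := by
    rw [← e0]
    simp only [dotProduct, Pi.star_apply]
    exact Finset.sum_congr rfl fun m _ => mul_comm _ _
  have e1 : ∀ k : Fin d, star (v f) ⬝ᵥ ((fun m => ((g k m : ℝ) : ℂ)) * v f)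
      = ∑ m, ((g k m : ℝ) : ℂ) := by
    intro k
    simp only [dotProduct, Pi.star_apply, Pi.mul_apply]
    exact Finset.sum_congr rfl fun m _ => by linear_combination ((g k m : ℝ) : ℂ) * hu m
  have e2 : ∀ k : Fin d, (star (v f) * fun m => ((g k m : ℝ) : ℂ)) ⬝ᵥ v f
      = ∑ m, ((g k m : ℝ) : ℂ) := by
    intro k
    simp only [dotProduct, Pi.star_apply, Pi.mul_apply]
    exact Finset.sum_congr rfl fun m _ => by linear_combination ((g k m : ℝ) : ℂ) * hu m
  have e1' : ∀ k : Fin d, v f ⬝ᵥ (star (v f) * fun m => ((g k m : ℝ) : ℂ))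
      = ∑ m, ((g k m : ℝ) : ℂ) := by
    intro k
    simp only [dotProduct, Pi.star_apply, Pi.mul_apply]
    exact Finset.sum_congr rfl fun m _ => by linear_combination ((g k m : ℝ) : ℂ) * hu m
  have e2' : ∀ k : Fin d, ((fun m => ((g k m : ℝ) : ℂ)) * v f) ⬝ᵥ star (v f)
      = ∑ m, ((g k m : ℝ) : ℂ) := by
    intro k
    simp only [dotProduct, Pi.star_apply, Pi.mul_apply]
    exact Finset.sum_congr rfl fun m _ => by linear_combination ((g k m : ℝ) : ℂ) * hu m
  have e3 : ∀ k l : Fin d,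
      (star (v f) * fun m => ((g k m : ℝ) : ℂ)) ⬝ᵥ ((fun m => ((g l m : ℝ) : ℂ)) * v f)
      = ∑ m, ((g k m : ℝ) : ℂ) * ((g l m : ℝ) : ℂ) := by
    intro k l
    simp only [dotProduct, Pi.star_apply, Pi.mul_apply]
    exact Finset.sum_congr rfl fun m _ => by
      linear_combination ((g k m : ℝ) : ℂ) * ((g l m : ℝ) : ℂ) * hu m
  have e3' : ∀ k l : Fin d,
      ((fun m => ((g k m : ℝ) : ℂ)) * v f) ⬝ᵥ (star (v f) * fun m => ((g l m : ℝ) : ℂ))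
      = ∑ m, ((g k m : ℝ) : ℂ) * ((g l m : ℝ) : ℂ) := by
    intro k l
    simp only [dotProduct, Pi.star_apply, Pi.mul_apply]
    exact Finset.sum_congr rfl fun m _ => by
      linear_combination ((g k m : ℝ) : ℂ) * ((g l m : ℝ) : ℂ) * hu m
  -- the inverse of S f
  set α : ℂ := (σ2 : ℂ)⁻¹ with hα_def
  set β : ℂ := -((Sb * Bb ^ 2 : ℝ) : ℂ) / ((σ2 : ℂ) * ((σ2 : ℂ) + M * ((Sb * Bb ^ 2 : ℝ) : ℂ))) with hβ_def
  have hs0 : ((σ2 : ℝ) : ℂ) ≠ 0 := by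
    simpa using ne_of_gt hσ2
  have hsa0 : ((σ2 : ℝ) : ℂ) + (M : ℂ) * ((Sb * Bb ^ 2 : ℝ) : ℂ) ≠ 0 := by
    have h : (0:ℝ) < σ2 + (M:ℝ) * (Sb * Bb ^ 2) := by positivity
    intro hcon
    have : ((σ2 + (M:ℝ) * (Sb * Bb ^ 2) : ℝ) : ℂ) = 0 := by push_cast; push_cast at hcon; linear_combination hcon
    rw [Complex.ofReal_eq_zero] at this
    exact h.ne' this
  have hden : (↑Sb * ↑Bb ^ 2 * ↑M * ↑σ2 + ↑σ2 ^ 2 : ℂ) ≠ 0 := by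
    have h : (0:ℝ) < Sb * Bb ^ 2 * M * σ2 + σ2 ^ 2 := by positivity
    intro hcon
    have : ((Sb * Bb ^ 2 * M * σ2 + σ2 ^ 2 : ℝ) : ℂ) = 0 := by push_cast; push_cast at hcon; linear_combination hcon
    rw [Complex.ofReal_eq_zero] at this
    exact h.ne' this
  have hA2 : vecMulVec (v f) (star (v f)) * vecMulVec (v f) (star (v f))
      = (M : ℂ) • vecMulVec (v f) (star (v f)) := by rw [L3', e0]
  have hSinv : (S f)⁻¹ = α • 1 + β • vecMulVec (v f) (star (v f)) := by
    apply Matrix.inv_eq_right_inv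
    rw [hS]
    have expand : (((Sb * Bb ^ 2 : ℝ) : ℂ) • vecMulVec (v f) (star (v f)) + ((σ2 : ℝ) : ℂ) • (1 : Matrix (Fin M) (Fin M) ℂ)) * (α • 1 + β • vecMulVec (v f) (star (v f)))
        = (((Sb * Bb ^ 2 : ℝ) : ℂ) * α + (M : ℂ) * (((Sb * Bb ^ 2 : ℝ) : ℂ) * β) + ((σ2 : ℝ) : ℂ) * β) • vecMulVec (v f) (star (v f)) + (((σ2 : ℝ) : ℂ) * α) • 1 := by
      simp only [Matrix.add_mul, Matrix.mul_add, smul_mul_assoc, mul_smul_comm,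
        Matrix.one_mul, Matrix.mul_one, hA2, smul_smul]
      module
    rw [expand]
    have h1 : ((σ2 : ℝ) : ℂ) * α = 1 := by
      rw [hα_def]; field_simp
    have h2 : ((Sb * Bb ^ 2 : ℝ) : ℂ) * α + (M : ℂ) * (((Sb * Bb ^ 2 : ℝ) : ℂ) * β) + ((σ2 : ℝ) : ℂ) * β = 0 := by
      rw [hα_def, hβ_def]
      field_simp [hs0, hsa0, hden]
      have hsa1 : ((σ2 : ℝ) : ℂ) + ((Sb * Bb ^ 2 : ℝ) : ℂ) * (M : ℂ) ≠ 0 := by rw [mul_comm]; exact hsa0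
      field_simp
      ring
    rw [h1, h2]; simp
  rw [hSinv, hS' i f, hS' j f, hD i, hD j]
  simp only [smul_mul_assoc, mul_smul_comm, Matrix.mul_sub, Matrix.sub_mul,
    Matrix.mul_add, Matrix.add_mul, Matrix.one_mul, Matrix.mul_one,
    L1', L2', L3', smul_smul, smul_sub, smul_add,
    Matrix.trace_smul, Matrix.trace_add, Matrix.trace_sub, L4',
    e0, e0', e1, e2, e1', e2', e3, e3']
  simp only [smul_eq_mul]
  have hM0 : ((M : ℝ)) ≠ 0 := by
    have : (0:ℝ) < M := by exact_mod_cast Nat.lt_of_lt_of_le (by norm_num) hM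
    exact this.ne'
  have cQ : ∀ k : Fin d, (∑ m : Fin M, ((g k m : ℝ) : ℂ)) = ((∑ m, g k m : ℝ) : ℂ) := by
    intro k; push_cast; rfl
  have cR : (∑ m : Fin M, ((g i m : ℝ) : ℂ) * ((g j m : ℝ) : ℂ))
      = ((∑ m, g i m * g j m : ℝ) : ℂ) := by push_cast; rfl
  rw [cQ i, cQ j, cR, hα_def, hβ_def]
  -- geometry matrix entry
  have hPg : ∀ k : Fin d, P *ᵥ g k = fun m => g k m - (M:ℝ)⁻¹ * ∑ m', g k m' := by
    intro k; funext m
    rw [hP, Matrix.sub_mulVec, Matrix.smul_mulVec, Matrix.one_mulVec]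
    simp only [Pi.sub_apply, Pi.smul_apply, smul_eq_mul, Matrix.mulVec, dotProduct,
      vecMulVec_apply, Pi.one_apply, one_mul]
  have hGij : G i j = (∑ m, g i m * g j m) - (∑ m, g i m) * (∑ m, g j m) / M := by
    rw [hG, hPg, hPg]
    simp only [dotProduct, sub_mul, mul_sub, Finset.sum_sub_distrib,
      ← Finset.sum_mul, ← Finset.mul_sum, Finset.sum_const, Finset.card_fin, nsmul_eq_mul]
    field_simp
    ring
  have hsaR : σ2 + (M:ℝ) * (Sb * Bb ^ 2) ≠ 0 := by positivity
  have hRHS : (2*π*f)^2 * w * G i j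
      = 8*π^2*f^2 * M * (Sb*Bb^2)^2 / (σ2*(σ2 + M*(Sb*Bb^2)))
        * ((∑ m, g i m * g j m) - (∑ m, g i m)*(∑ m, g j m)/M) := by
    rw [hw, hγ, hGij]
    field_simp
    ring
  rw [hRHS]
  have hsa0' : (↑σ2 + ↑M * (↑Sb * ↑Bb ^ 2) : ℂ) ≠ 0 := by
    intro hcon; apply hsa0; push_cast; linear_combination hcon
  have hM0' : ((M : ℂ)) ≠ 0 := by exact_mod_cast Nat.cast_ne_zero.mpr (by omega)
  push_cast
  field_simp [hs0, hsa0', hM0']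
  have hsa2 : (↑σ2 + ↑Sb * ↑Bb ^ 2 * ↑M : ℂ) ≠ 0 := by
    intro hcon; apply hsa0'; linear_combination hcon
  field_simp
  rw [Complex.I_sq]
  ring
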